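/- Let Γ be a finite labelled simple graph with vertex set V and Artin group A_Γ. Let N₀ ≥ 1 and suppose that A_Γ satisfies the power alternative relative to complete parabolics with uniform exponent N for every N ≥ N₀. Suppose moreover that for every subset Λ ⊆ V spanning a complete subgraph of Γ there exists m_Λ ≥ 1 such that the standard parabolic subgroup A_Λ satisfies the power alternative with uniform exponent m_Λ. Let K = lcm{ m_Λ : Λ ⊆ V spanning a complete subgraph } and let N be the smallest positive multiple of K with N ≥ N₀. Then A_Γ satisfies the power alternative with uniform exponent N. -/

import Mathlib

open scoped Classical

/-- `x` and `y` freely generate a free subgroup of rank 2. -/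
def FreelyGenerateF2 {G : Type*} [Group G] (x y : G) : Prop :=
  Function.Injective (FreeGroup.lift (fun i : Fin 2 => if i = 0 then x else y) :
    FreeGroup (Fin 2) →* G)

/-- `G` satisfies the power alternative. -/
def PowerAlternative (G : Type*) [Group G] : Prop :=
  ∀ g h : G, ∃ n : ℕ, 1 ≤ n ∧ (Commute (g ^ n) (h ^ n) ∨ FreelyGenerateF2 (g ^ n) (h ^ n))

/-- `G` satisfies the power alternative with uniform exponent `n`. -/
def UniformPowerAlternative (G : Type*) [Group G] (n : ℕ) : Prop :=
  ∀ g h : G, Commute (g ^ n) (h ^ n) ∨ FreelyGenerateF2 (g ^ n) (h ^ n)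

/-- The alternating word `stst⋯` of length `k` in the free group on `V`. -/
def artinWord {V : Type*} (s t : V) (k : ℕ) : FreeGroup V :=
  ((List.range k).map (fun i => if i % 2 = 0 then FreeGroup.of s else FreeGroup.of t)).prod

/-- The Artin relations of a labelled graph. -/
def artinRels {V : Type*} (Γ : SimpleGraph V) (m : V → V → ℕ) : Set (FreeGroup V) :=
  {r | ∃ s t : V, Γ.Adj s t ∧ r = artinWord s t (m s t) * (artinWord t s (m s t))⁻¹}

/-- The Artin group of a labelled graph. -/
abbrev ArtinGroup {V : Type*} (Γ : SimpleGraph V) (m : V → V → ℕ) : Type _ :=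
  PresentedGroup (artinRels Γ m)

/-- The standard generator of the Artin group associated to the vertex `v`. -/
def artinGen {V : Type*} (Γ : SimpleGraph V) (m : V → V → ℕ) (v : V) : ArtinGroup Γ m :=
  PresentedGroup.of v

/-- The standard parabolic subgroup of `A_Γ` generated by `S ⊆ V`. -/
def standardParabolic {V : Type*} (Γ : SimpleGraph V) (m : V → V → ℕ) (S : Set V) :
    Subgroup (ArtinGroup Γ m) :=
  Subgroup.closure (artinGen Γ m '' S)

/-- The conjugate `g P g⁻¹` of a subgroup `P`. -/
def conjSubgroup {G : Type*} [Group G] (g : G) (P : Subgroup G) : Subgroup G :=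
  Subgroup.map (MulAut.conj g).toMonoidHom P

/-- Parabolic subgroups: conjugates of standard parabolic subgroups. -/
def IsParabolic {V : Type*} (Γ : SimpleGraph V) (m : V → V → ℕ)
    (P : Subgroup (ArtinGroup Γ m)) : Prop :=
  ∃ (g : ArtinGroup Γ m) (S : Set V), P = conjSubgroup g (standardParabolic Γ m S)

/-- The parabolic intersection property. -/
def ParabolicIntersectionProperty {V : Type*} (Γ : SimpleGraph V) (m : V → V → ℕ) : Prop :=
  ∀ P Q : Subgroup (ArtinGroup Γ m), IsParabolic Γ m P → IsParabolic Γ m Q →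
    IsParabolic Γ m (P ⊓ Q)

/-- The normaliser structure property. -/
def NormaliserStructureProperty {V : Type*} (Γ : SimpleGraph V) (m : V → V → ℕ) : Prop :=
  ∀ S : Set V,
    (Subgroup.normalizer (standardParabolic Γ m S : Set (ArtinGroup Γ m)) : Set (ArtinGroup Γ m)) =
      {x | ∃ a ∈ standardParabolic Γ m S, ∃ q : ArtinGroup Γ m,
        ((fun y => q * y * q⁻¹) '' (artinGen Γ m '' S) = artinGen Γ m '' S) ∧ x = a * q}

/-- `Λ` spans a complete subgraph of `Γ`. -/
def SpansComplete {V : Type*} (Γ : SimpleGraph V) (Λ : Set V) : Prop :=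
  ∀ a ∈ Λ, ∀ b ∈ Λ, a ≠ b → Γ.Adj a b

/-- `A_Γ` satisfies the power alternative relative to complete parabolics with
uniform exponent `N`. -/
def RelativePowerAlternative {V : Type*} (Γ : SimpleGraph V) (m : V → V → ℕ) (N : ℕ) :
    Prop :=
  ∀ g h : ArtinGroup Γ m,
    (∃ (Λ : Set V) (x : ArtinGroup Γ m), SpansComplete Γ Λ ∧
        g ∈ conjSubgroup x (standardParabolic Γ m Λ) ∧
        h ∈ conjSubgroup x (standardParabolic Γ m Λ)) ∨
    Commute (g ^ N) (h ^ N) ∨ FreelyGenerateF2 (g ^ N) (h ^ N)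

section Aux

lemma aux_key_head {α : Type*} [DecidableEq α] (x : α) (b : Bool) (w : FreeGroup α)
    (hw : w.toWord.head? ≠ some (x, !b)) :
    (FreeGroup.mk [(x, b)] * w).toWord = (x, b) :: w.toWord := by
  have h1 : FreeGroup.mk [(x, b)] * w = FreeGroup.mk ((x, b) :: w.toWord) := by
    conv_lhs => rw [← FreeGroup.mk_toWord (x := w)]
    rw [FreeGroup.mul_mk]
    rfl
  rw [h1, FreeGroup.toWord_mk, FreeGroup.reduce.cons, FreeGroup.reduce_toWord]
  cases hW : w.toWord with
  | nil => rfl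
  | cons hd tl =>
    rw [hW] at hw
    have hcond : ¬((x, b).1 = hd.1 ∧ (x, b).2 = !hd.2) := by
      rintro ⟨h1', h2'⟩
      apply hw
      have : hd = (x, !b) := by
        apply Prod.ext
        · exact h1'.symm
        · simp only at h2'
          rw [h2']
          simp
      rw [this]
      rfl
    simp only [hcond, if_false]

lemma aux_key_head_pow {α : Type*} [DecidableEq α] (x : α) (b : Bool) (c : ℕ) (hc : 1 ≤ c)
    (w : FreeGroup α) (hw : w.toWord.head? ≠ some (x, !b)) :
    ((FreeGroup.mk [(x, b)]) ^ c * w).toWord.head? = some (x, b) := by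
  induction c, hc using Nat.le_induction generalizing w with
  | base => rw [pow_one, aux_key_head x b w hw]; rfl
  | succ c hc ih =>
    have h2 : FreeGroup.mk [(x, b)] ^ (c + 1) * w
        = FreeGroup.mk [(x, b)] ^ c * (FreeGroup.mk [(x, b)] * w) := by
      rw [pow_succ, mul_assoc]
    rw [h2]
    apply ih
    rw [aux_key_head x b w hw]
    simp

lemma aux_pow_lift_injective {ι : Type*} [DecidableEq ι] [Nontrivial ι] (c : ℕ) (hc : 1 ≤ c) :
    Function.Injective (FreeGroup.lift (fun i : ι => FreeGroup.of i ^ c) :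
      FreeGroup ι →* FreeGroup ι) := by
  have hof : ∀ i : ι, FreeGroup.of i = FreeGroup.mk [(i, true)] := fun i => rfl
  have hofinv : ∀ i : ι, (FreeGroup.of i)⁻¹ = FreeGroup.mk [(i, false)] := by
    intro i
    rw [hof, FreeGroup.inv_mk]
    rfl
  apply FreeGroup.injective_lift_of_ping_pong (a := fun i => FreeGroup.of i ^ c)
    (X := fun i => {w : FreeGroup ι | w.toWord.head? = some (i, true)})
    (Y := fun i => {w : FreeGroup ι | w.toWord.head? = some (i, false)})
  · intro i
    exact ⟨FreeGroup.of i, by simp [FreeGroup.toWord_of]⟩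
  · intro i j hij
    simp only [Function.onFun, Set.disjoint_left]
    intro w hwi hwj
    simp only [Set.mem_setOf_eq] at hwi hwj
    rw [hwi] at hwj
    exact hij (by simpa using hwj)
  · intro i j hij
    simp only [Function.onFun, Set.disjoint_left]
    intro w hwi hwj
    simp only [Set.mem_setOf_eq] at hwi hwj
    rw [hwi] at hwj
    exact hij (by simpa using hwj)
  · intro i j
    rw [Set.disjoint_left]
    intro w hwi hwj
    simp only [Set.mem_setOf_eq] at hwi hwj
    rw [hwi] at hwj
    simp at hwj
  · intro i w hw
    obtain ⟨v, hv, rfl⟩ := hw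
    simp only [Set.mem_compl_iff, Set.mem_setOf_eq] at hv
    show ((FreeGroup.of i ^ c) * v).toWord.head? = some (i, true)
    rw [hof]
    exact aux_key_head_pow i true c hc v (by simpa using hv)
  · intro i w hw
    obtain ⟨v, hv, rfl⟩ := hw
    simp only [Set.mem_compl_iff, Set.mem_setOf_eq] at hv
    show (((fun i : ι => FreeGroup.of i ^ c)⁻¹ i) * v).toWord.head? = some (i, false)
    have : (fun i : ι => FreeGroup.of i ^ c)⁻¹ i = FreeGroup.mk [(i, false)] ^ c := by
      simp only [Pi.inv_apply, ← inv_pow, hofinv]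
    rw [this]
    exact aux_key_head_pow i false c hc v (by simpa using hv)

lemma aux_freelyGenerate_map {G H : Type*} [Group G] [Group H] (f : G →* H)
    (hf : Function.Injective f) {x y : G} (h : FreelyGenerateF2 x y) :
    FreelyGenerateF2 (f x) (f y) := by
  have heq : (FreeGroup.lift (fun i : Fin 2 => if i = 0 then f x else f y) :
      FreeGroup (Fin 2) →* H)
      = f.comp (FreeGroup.lift (fun i : Fin 2 => if i = 0 then x else y)) := by
    ext i
    by_cases hi : i = 0 <;> simp [hi]
  unfold FreelyGenerateF2 at *
  rw [heq]
  exact hf.comp h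

lemma aux_freelyGenerate_pow {G : Type*} [Group G] {x y : G} (c : ℕ) (hc : 1 ≤ c)
    (h : FreelyGenerateF2 x y) : FreelyGenerateF2 (x ^ c) (y ^ c) := by
  have hinj : Function.Injective (FreeGroup.lift (fun i : Fin 2 => FreeGroup.of i ^ c) :
      FreeGroup (Fin 2) →* FreeGroup (Fin 2)) := aux_pow_lift_injective c hc
  have heq : (FreeGroup.lift (fun i : Fin 2 => if i = 0 then x ^ c else y ^ c) :
      FreeGroup (Fin 2) →* G)
      = (FreeGroup.lift (fun i : Fin 2 => if i = 0 then x else y)).comp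
        (FreeGroup.lift (fun i : Fin 2 => FreeGroup.of i ^ c)) := by
    ext i
    by_cases hi : i = 0 <;> simp [hi]
  unfold FreelyGenerateF2 at *
  rw [heq]
  exact h.comp hinj

end Aux

/-- from the relative power alternative and the uniform power alternative
for complete parabolics to the uniform power alternative. -/
theorem artin_uniform_power_alternative_of_relative
    {V : Type*} [Fintype V] (Γ : SimpleGraph V) (m : V → V → ℕ)
    (hsymm : ∀ s t : V, m s t = m t s)
    (hlabel : ∀ s t : V, Γ.Adj s t → 2 ≤ m s t)
    (N₀ : ℕ) (hN₀ : 1 ≤ N₀)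
    (hrel : ∀ N : ℕ, N₀ ≤ N → RelativePowerAlternative Γ m N)
    (mfun : Set V → ℕ)
    (hmfun : ∀ Λ : Set V, SpansComplete Γ Λ →
      1 ≤ mfun Λ ∧ UniformPowerAlternative (standardParabolic Γ m Λ) (mfun Λ))
    (K : ℕ)
    (hK : K = Finset.lcm
      ((Finset.univ : Finset (Finset V)).filter (fun Λ => SpansComplete Γ (↑Λ : Set V)))
      (fun Λ => mfun (↑Λ : Set V)))
    (N : ℕ) (hNpos : 0 < N) (hKdvd : K ∣ N) (hNge : N₀ ≤ N)
    (hNmin : ∀ k : ℕ, 0 < k → K ∣ k → N₀ ≤ k → N ≤ k) :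
    UniformPowerAlternative (ArtinGroup Γ m) N := by
  intro g h
  rcases hrel N hNge g h with ⟨Λ, x, hΛ, hg, hh⟩ | hc | hf
  · -- g, h lie in a conjugate of a complete standard parabolic
    obtain ⟨hm1, hupa⟩ := hmfun Λ hΛ
    -- mfun Λ divides N
    have hdvdK : mfun Λ ∣ K := by
      rw [hK]
      apply Finset.dvd_lcm (b := Λ)
      simp [Finset.mem_filter]
      exact ⟨⟨Λ.toFinset, Set.coe_toFinset Λ⟩, hΛ⟩
    have hdvdN : mfun Λ ∣ N := hdvdK.trans hKdvd
    set c : ℕ := N / mfun Λ with hcdef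
    have hmc : mfun Λ * c = N := Nat.mul_div_cancel' hdvdN
    have hc1 : 1 ≤ c := by
      rcases Nat.eq_zero_or_pos c with h0 | h1
      · rw [h0, Nat.mul_zero] at hmc; omega
      · exact h1
    set P := standardParabolic Γ m Λ with hP
    obtain ⟨a, ha, hga⟩ := hg
    obtain ⟨b, hb, hhb⟩ := hh
    -- the embedding of P into the Artin group followed by conjugation by x
    set f : P →* ArtinGroup Γ m := (MulAut.conj x).toMonoidHom.comp P.subtype with hfdef
    have hfinj : Function.Injective f :=
      (MulAut.conj x).injective.comp P.subtype_injective
    have hfa : f ⟨a, ha⟩ = g := hga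
    have hfb : f ⟨b, hb⟩ = h := hhb
    rcases hupa ⟨a, ha⟩ ⟨b, hb⟩ with hcomm | hfree
    · left
      have h1 : Commute (f ((⟨a, ha⟩ : P) ^ mfun Λ)) (f ((⟨b, hb⟩ : P) ^ mfun Λ)) :=
        hcomm.map f
      rw [map_pow, map_pow, hfa, hfb] at h1
      have : Commute ((g ^ mfun Λ) ^ c) ((h ^ mfun Λ) ^ c) := h1.pow_pow c c
      rwa [← pow_mul, ← pow_mul, hmc] at this
    · right
      have h1 : FreelyGenerateF2 (f ((⟨a, ha⟩ : P) ^ mfun Λ)) (f ((⟨b, hb⟩ : P) ^ mfun Λ)) :=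
        aux_freelyGenerate_map f hfinj hfree
      rw [map_pow, map_pow, hfa, hfb] at h1
      have : FreelyGenerateF2 ((g ^ mfun Λ) ^ c) ((h ^ mfun Λ) ^ c) :=
        aux_freelyGenerate_pow c hc1 h1
      rwa [← pow_mul, ← pow_mul, hmc] at this
  · exact Or.inl hc
  · exact Or.inr hf
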